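/- There exists a real constant ε₀ > 0 such that for every real ε with 0 < ε < ε₀, every simple graph G on a finite vertex set, every nontrivial cluster C of the agreement decomposition of G with parameter ε/10^14, and every vertex u ∈ C, it holds that |N(u) ∩ C| ≥ (1 − ε/10^13)·|C|. -/

import Mathlib

open scoped symmDiff Classical

/-- Two vertices `u, v` are in `ε`-agreement in `G` if
`|N(u) △ N(v)| < ε·max(|N(u)|, |N(v)|)`. -/
def InAgreement {V : Type*} [Fintype V] [DecidableEq V]
    (G : SimpleGraph V) [DecidableRel G.Adj] (ε : ℝ) (u v : V) : Prop :=
  ((G.neighborFinset u ∆ G.neighborFinset v).card : ℝ) <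
    ε * (max (G.neighborFinset u).card (G.neighborFinset v).card : ℕ)

/-- A vertex is `ε`-heavy if it is in `ε`-agreement with more than a
`(1 − ε)`-fraction of its neighbors. -/
noncomputable def Heavy {V : Type*} [Fintype V] [DecidableEq V]
    (G : SimpleGraph V) [DecidableRel G.Adj] (ε : ℝ) (u : V) : Prop :=
  (1 - ε) * ((G.neighborFinset u).card : ℝ) <
    (((G.neighborFinset u).filter (fun v => InAgreement G ε u v)).card : ℝ)

/-- The graph `G̃` obtained from `G` by deleting every edge whose endpoints are
not in `ε`-agreement and then every remaining edge both of whose endpoints are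
`ε`-light. -/
noncomputable def tildeGraph {V : Type*} [Fintype V] [DecidableEq V]
    (G : SimpleGraph V) [DecidableRel G.Adj] (ε : ℝ) : SimpleGraph V where
  Adj u v := G.Adj u v ∧ InAgreement G ε u v ∧ (Heavy G ε u ∨ Heavy G ε v)
  symm := ⟨by
    intro u v ⟨h1, h2, h3⟩
    refine ⟨h1.symm, ?_, h3.symm⟩
    unfold InAgreement at h2 ⊢
    rwa [symmDiff_comm, max_comm]⟩
  loopless := ⟨fun u h => G.irrefl h.1⟩

/-- `C` is a cluster of the agreement decomposition of `G` with parameter `ε`: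
the vertex set of a connected component of `G̃`. -/
noncomputable def IsCluster {V : Type*} [Fintype V] [DecidableEq V]
    (G : SimpleGraph V) [DecidableRel G.Adj] (ε : ℝ) (C : Finset V) : Prop :=
  ∃ v : V, C = Finset.univ.filter (fun w => (tildeGraph G ε).Reachable v w)

set_option linter.unusedSectionVars false

section Basic
variable {V : Type} [Fintype V] [DecidableEq V] (G : SimpleGraph V) [DecidableRel G.Adj]

lemma sdiff_subset_sd (A B : Finset V) : A \ B ⊆ A ∆ B := by
  intro a ha
  rw [Finset.mem_symmDiff]
  rw [Finset.mem_sdiff] at ha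
  exact Or.inl ha

lemma nat_card_le_add_sd (A B : Finset V) : A.card ≤ B.card + (A ∆ B).card := by
  have h1 := Finset.card_inter_add_card_sdiff A B
  have h3 := Finset.card_le_card (sdiff_subset_sd A B)
  have h4 := Finset.card_le_card (Finset.inter_subset_right (s₁ := A) (s₂ := B))
  omega

lemma nat_inter_ge (A B : Finset V) : A.card ≤ (A ∩ B).card + (A ∆ B).card := by
  have h1 := Finset.card_inter_add_card_sdiff A B
  have h3 := Finset.card_le_card (sdiff_subset_sd A B)
  omega

lemma sd_tri (u v w : V) :
    ((G.neighborFinset u ∆ G.neighborFinset w).card : ℝ) ≤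
      ((G.neighborFinset u ∆ G.neighborFinset v).card : ℝ) +
      ((G.neighborFinset v ∆ G.neighborFinset w).card : ℝ) := by
  have h1 := Finset.card_le_card
    (symmDiff_triangle (G.neighborFinset u) (G.neighborFinset v) (G.neighborFinset w))
  have h2 := Finset.card_union_le (G.neighborFinset u ∆ G.neighborFinset v)
    (G.neighborFinset v ∆ G.neighborFinset w)
  exact_mod_cast (h1.trans h2)


noncomputable def deg (u : V) : ℝ := ((G.neighborFinset u).card : ℝ)
noncomputable def sdc (u v : V) : ℝ := ((G.neighborFinset u ∆ G.neighborFinset v).card : ℝ)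

variable {G}

lemma deg_nonneg (u : V) : 0 ≤ deg G u := Nat.cast_nonneg _
lemma sdc_nonneg (u v : V) : 0 ≤ sdc G u v := Nat.cast_nonneg _
lemma sdc_comm (u v : V) : sdc G u v = sdc G v u := by
  unfold sdc; rw [symmDiff_comm]
lemma sdc_self (u : V) : sdc G u u = 0 := by
  unfold sdc; rw [symmDiff_self]; simp

lemma agr_iff {δ : ℝ} {u v : V} :
    InAgreement G δ u v ↔ sdc G u v < δ * max (deg G u) (deg G v) := by
  unfold InAgreement sdc deg
  rw [Nat.cast_max]

lemma deg_le_add_sdc (u v : V) : deg G u ≤ deg G v + sdc G u v := by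
  have := nat_card_le_add_sd (G.neighborFinset u) (G.neighborFinset v)
  unfold deg sdc; exact_mod_cast this

lemma inter_ge (u v : V) :
    deg G u - sdc G u v ≤ ((G.neighborFinset u ∩ G.neighborFinset v).card : ℝ) := by
  have := nat_inter_ge (G.neighborFinset u) (G.neighborFinset v)
  unfold deg sdc
  have : ((G.neighborFinset u).card : ℝ) ≤ ((G.neighborFinset u ∩ G.neighborFinset v).card : ℝ)
      + ((G.neighborFinset u ∆ G.neighborFinset v).card : ℝ) := by exact_mod_cast this
  linarith

lemma sd_tri' (u v w : V) : sdc G u w ≤ sdc G u v + sdc G v w := sd_tri G u v w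

/-- degree ratio: if `sdc u v ≤ a * max`, `a ≤ 1/10`, then `deg v ≤ (10/9) deg u`. -/
lemma deg_ratio {a : ℝ} {u v : V} (ha0 : 0 ≤ a) (ha : a ≤ 1/10)
    (h : sdc G u v ≤ a * max (deg G u) (deg G v)) : deg G v ≤ (10/9) * deg G u := by
  have h1 : deg G v ≤ deg G u + sdc G u v := by
    rw [sdc_comm]; exact deg_le_add_sdc v u
  rcases le_total (deg G v) (deg G u) with hle | hle
  · nlinarith [deg_nonneg (G := G) u]
  · rw [max_eq_right hle] at h
    nlinarith [sdc_nonneg (G := G) u v, mul_le_mul_of_nonneg_right ha (deg_nonneg (G := G) v)]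

/-- chain: `sdc u v ≤ a max(du,dv)`, `sdc v w ≤ b max(dv,dw)` gives
`sdc u w ≤ (a+b) * (10/9) * max du dw`. -/
lemma sd_chain {a b : ℝ} {u v w : V} (ha0 : 0 ≤ a) (hb0 : 0 ≤ b)
    (ha : a ≤ 1/10) (hb : b ≤ 1/10)
    (h1 : sdc G u v ≤ a * max (deg G u) (deg G v))
    (h2 : sdc G v w ≤ b * max (deg G v) (deg G w)) :
    sdc G u w ≤ (a + b) * (10/9) * max (deg G u) (deg G w) := by
  have hM : deg G u ≤ max (deg G u) (deg G w) := le_max_left _ _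
  have hM' : deg G w ≤ max (deg G u) (deg G w) := le_max_right _ _
  have hv : deg G v ≤ (10/9) * deg G u := deg_ratio ha0 ha h1
  have hMv : max (deg G u) (deg G v) ≤ (10/9) * max (deg G u) (deg G w) := by
    have n1 : (0:ℝ) ≤ deg G u := deg_nonneg u
    apply max_le <;> nlinarith
  have hMv' : max (deg G v) (deg G w) ≤ (10/9) * max (deg G u) (deg G w) := by
    have n1 : (0:ℝ) ≤ deg G u := deg_nonneg u
    have n2 : (0:ℝ) ≤ deg G w := deg_nonneg w
    apply max_le <;> nlinarith
  have ht : sdc G u w ≤ sdc G u v + sdc G v w := sd_tri' u v w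
  nlinarith [mul_le_mul_of_nonneg_left hMv ha0, mul_le_mul_of_nonneg_left hMv' hb0]


lemma exists_common_agree {δ : ℝ} {h1 h2 : V} (hδ0 : 0 < δ)
    (H1 : Heavy G δ h1) (H2 : Heavy G δ h2)
    (hov : δ * deg G h1 + δ * deg G h2 <
      ((G.neighborFinset h1 ∩ G.neighborFinset h2).card : ℝ)) :
    ∃ y, InAgreement G δ h1 y ∧ InAgreement G δ h2 y := by
  classical
  set A1 := (G.neighborFinset h1).filter (fun y => InAgreement G δ h1 y) with hA1
  set A2 := (G.neighborFinset h2).filter (fun y => InAgreement G δ h2 y) with hA2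
  set I := G.neighborFinset h1 ∩ G.neighborFinset h2 with hI
  have hc1 : ((G.neighborFinset h1 \ A1).card : ℝ) < δ * deg G h1 := by
    have hsub : A1 ⊆ G.neighborFinset h1 := Finset.filter_subset _ _
    have := Finset.card_sdiff_of_subset hsub
    have hle := Finset.card_le_card hsub
    have HH : (1 - δ) * deg G h1 < (A1.card : ℝ) := H1
    have : ((G.neighborFinset h1 \ A1).card : ℝ) =
        deg G h1 - (A1.card : ℝ) := by
      unfold deg; rw [this]; push_cast [hle]; ring
    rw [this]
    nlinarith [deg_nonneg (G := G) h1]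
  have hc2 : ((G.neighborFinset h2 \ A2).card : ℝ) < δ * deg G h2 := by
    have hsub : A2 ⊆ G.neighborFinset h2 := Finset.filter_subset _ _
    have := Finset.card_sdiff_of_subset hsub
    have hle := Finset.card_le_card hsub
    have HH : (1 - δ) * deg G h2 < (A2.card : ℝ) := H2
    have : ((G.neighborFinset h2 \ A2).card : ℝ) =
        deg G h2 - (A2.card : ℝ) := by
      unfold deg; rw [this]; push_cast [hle]; ring
    rw [this]
    nlinarith [deg_nonneg (G := G) h2]
  have hsplit : I \ (A1 ∩ A2) ⊆ (I \ A1) ∪ (I \ A2) := by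
    intro z hz
    simp only [Finset.mem_sdiff, Finset.mem_inter, Finset.mem_union] at hz ⊢
    tauto
  have hs1 : I \ A1 ⊆ G.neighborFinset h1 \ A1 := by
    apply Finset.sdiff_subset_sdiff _ (le_refl _)
    exact Finset.inter_subset_left
  have hs2 : I \ A2 ⊆ G.neighborFinset h2 \ A2 := by
    apply Finset.sdiff_subset_sdiff _ (le_refl _)
    exact Finset.inter_subset_right
  have hcard : ((I \ (A1 ∩ A2)).card : ℝ) < δ * deg G h1 + δ * deg G h2 := by
    have := Finset.card_le_card hsplit
    have h2' := Finset.card_union_le (I \ A1) (I \ A2)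
    have l1 := Finset.card_le_card hs1
    have l2 := Finset.card_le_card hs2
    have : (I \ (A1 ∩ A2)).card ≤ (G.neighborFinset h1 \ A1).card
        + (G.neighborFinset h2 \ A2).card := by omega
    calc ((I \ (A1 ∩ A2)).card : ℝ) ≤ ((G.neighborFinset h1 \ A1).card : ℝ)
          + ((G.neighborFinset h2 \ A2).card : ℝ) := by exact_mod_cast this
      _ < δ * deg G h1 + δ * deg G h2 := by linarith
  have hdecomp := Finset.card_inter_add_card_sdiff I (A1 ∩ A2)
  have hpos : 0 < (I ∩ (A1 ∩ A2)).card := by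
    by_contra hc
    push_neg at hc
    interval_cases h : (I ∩ (A1 ∩ A2)).card
    · have : (I.card : ℝ) = ((I \ (A1 ∩ A2)).card : ℝ) := by
        exact_mod_cast (by omega : I.card = (I \ (A1 ∩ A2)).card)
      rw [hI] at this
      linarith [hov, hcard, this]
  obtain ⟨y, hy⟩ := Finset.card_pos.mp hpos
  simp only [Finset.mem_inter, hA1, hA2, Finset.mem_filter] at hy
  exact ⟨y, hy.2.1.2, hy.2.2.2⟩

lemma max_deg_nonneg (u v : V) : (0:ℝ) ≤ max (deg G u) (deg G v) :=
  le_trans (deg_nonneg u) (le_max_left _ _)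

lemma bootstrap {δ : ℝ} {h1 h2 : V} (hδ0 : 0 < δ) (hδ : δ ≤ 1/30)
    (H1 : Heavy G δ h1) (H2 : Heavy G δ h2)
    (hov : δ * deg G h1 + δ * deg G h2 <
      ((G.neighborFinset h1 ∩ G.neighborFinset h2).card : ℝ)) :
    sdc G h1 h2 ≤ 3 * δ * max (deg G h1) (deg G h2) := by
  obtain ⟨y, a1, a2⟩ := exists_common_agree hδ0 H1 H2 hov
  have s1 : sdc G h1 y ≤ δ * max (deg G h1) (deg G y) := (agr_iff.mp a1).le
  have s2 : sdc G y h2 ≤ δ * max (deg G y) (deg G h2) := by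
    rw [sdc_comm, max_comm]
    exact (agr_iff.mp a2).le
  have hch := sd_chain (u := h1) (v := y) (w := h2) hδ0.le hδ0.le
    (by linarith) (by linarith) s1 s2
  nlinarith [max_deg_nonneg (G := G) h1 h2]

lemma tilde_adj {δ : ℝ} {x y : V} :
    (tildeGraph G δ).Adj x y ↔
      (G.Adj x y ∧ InAgreement G δ x y ∧ (Heavy G δ x ∨ Heavy G δ y)) := Iff.rfl

lemma one_le_deg {x y : V} (h : G.Adj x y) : 1 ≤ deg G x := by
  have : y ∈ G.neighborFinset x := (SimpleGraph.mem_neighborFinset _ _ _).mpr h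
  have := Finset.card_pos.mpr ⟨y, this⟩
  unfold deg
  exact_mod_cast this

lemma two_le_sdc {x y : V} (h : G.Adj x y) : 2 ≤ sdc G x y := by
  have hxy : x ≠ y := G.ne_of_adj h
  have hsub : ({x, y} : Finset V) ⊆ G.neighborFinset x ∆ G.neighborFinset y := by
    intro z hz
    simp only [Finset.mem_insert, Finset.mem_singleton] at hz
    rw [Finset.mem_symmDiff]
    rcases hz with rfl | rfl
    · right
      refine ⟨(SimpleGraph.mem_neighborFinset _ _ _).mpr h.symm, ?_⟩
      simp [SimpleGraph.mem_neighborFinset]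
    · left
      refine ⟨(SimpleGraph.mem_neighborFinset _ _ _).mpr h, ?_⟩
      simp [SimpleGraph.mem_neighborFinset]
  have hc : ({x, y} : Finset V).card = 2 := by
    rw [Finset.card_insert_of_notMem (by simpa using hxy), Finset.card_singleton]
  have := Finset.card_le_card hsub
  rw [hc] at this
  unfold sdc
  exact_mod_cast this

lemma deg_big {δ : ℝ} (hδ0 : 0 < δ) (hδ : δ ≤ 1/10) {x y : V}
    (h : (tildeGraph G δ).Adj x y) : 1 ≤ δ * deg G x := by
  obtain ⟨hadj, hagr, -⟩ := h
  have h2 : 2 ≤ sdc G x y := two_le_sdc hadj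
  have hlt := agr_iff.mp hagr
  have hr : deg G y ≤ (10/9) * deg G x := deg_ratio hδ0.le hδ hlt.le
  have hmax : max (deg G x) (deg G y) ≤ (10/9) * deg G x := by
    have := deg_nonneg (G := G) x
    apply max_le <;> nlinarith
  nlinarith [deg_nonneg (G := G) x, mul_le_mul_of_nonneg_left hmax hδ0.le]


lemma agr_symm {δ : ℝ} {x y : V} (h : InAgreement G δ x y) : InAgreement G δ y x := by
  rw [agr_iff] at h ⊢
  rwa [sdc_comm, max_comm]

lemma agr_le3 {δ : ℝ} {x y : V} (hδ0 : 0 ≤ δ) (h : InAgreement G δ x y) :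
    sdc G x y ≤ 3 * δ * max (deg G x) (deg G y) := by
  have := agr_iff.mp h
  nlinarith [max_deg_nonneg (G := G) x y]

lemma agr2 {δ : ℝ} {x y z : V} (hδ0 : 0 ≤ δ) (hδ : δ ≤ 1/10)
    (h1 : InAgreement G δ x y) (h2 : InAgreement G δ y z) :
    sdc G x z ≤ 3 * δ * max (deg G x) (deg G z) := by
  have hch := sd_chain hδ0 hδ0 hδ hδ (agr_iff.mp h1).le (agr_iff.mp h2).le
  nlinarith [max_deg_nonneg (G := G) x z]

lemma inter_ge_max (u v : V) :
    max (deg G u) (deg G v) - sdc G u v ≤ ((G.neighborFinset u ∩ G.neighborFinset v).card : ℝ) := by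
  rcases max_cases (deg G u) (deg G v) with ⟨hm, -⟩ | ⟨hm, -⟩
  · rw [hm]; exact inter_ge u v
  · rw [hm, Finset.inter_comm, sdc_comm]
    exact inter_ge v u

lemma near_trans {δ : ℝ} {h0 h1 h2 : V} (hδ0 : 0 < δ) (hδ : δ ≤ 1/1000)
    (H0 : Heavy G δ h0) (H2 : Heavy G δ h2) (d0pos : 1 ≤ deg G h0)
    (b1 : sdc G h0 h1 ≤ 3 * δ * max (deg G h0) (deg G h1))
    (b2 : sdc G h1 h2 ≤ 3 * δ * max (deg G h1) (deg G h2)) :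
    sdc G h0 h2 ≤ 3 * δ * max (deg G h0) (deg G h2) := by
  have hch := sd_chain (by positivity) (by positivity) (by linarith) (by linarith) b1 b2
  apply bootstrap hδ0 (by linarith) H0 H2
  have hi := inter_ge_max (G := G) h0 h2
  have hM0 : deg G h0 ≤ max (deg G h0) (deg G h2) := le_max_left _ _
  have hM2 : deg G h2 ≤ max (deg G h0) (deg G h2) := le_max_right _ _
  have hMpos : 1 ≤ max (deg G h0) (deg G h2) := le_trans d0pos hM0
  nlinarith [sdc_nonneg (G := G) h0 h2]

lemma double_count (B A : Finset V) :
    ∑ w ∈ B, (G.neighborFinset w ∩ A).card = ∑ y ∈ A, (G.neighborFinset y ∩ B).card := by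
  have key : ∀ (S : Finset V) (w : V),
      (G.neighborFinset w ∩ S).card = (S.filter (fun y => G.Adj w y)).card := by
    intro S w
    congr 1
    ext z
    simp [SimpleGraph.mem_neighborFinset, and_comm]
  calc ∑ w ∈ B, (G.neighborFinset w ∩ A).card
      = ∑ w ∈ B, ∑ y ∈ A, if G.Adj w y then 1 else 0 := by
        refine Finset.sum_congr rfl fun w _ => ?_
        rw [key, Finset.card_filter]
    _ = ∑ y ∈ A, ∑ w ∈ B, if G.Adj w y then 1 else 0 := Finset.sum_comm
    _ = ∑ y ∈ A, (G.neighborFinset y ∩ B).card := by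
        refine Finset.sum_congr rfl fun y _ => ?_
        rw [key, Finset.card_filter]
        refine Finset.sum_congr rfl fun w _ => ?_
        simp [G.adj_comm]

set_option maxHeartbeats 1000000 in
theorem master (δ : ℝ) (hδ0 : 0 < δ) (hδ : δ ≤ 1/1000) (C : Finset V)
    (hC : IsCluster G δ C) (hC1 : 1 < C.card) (u : V) (hu : u ∈ C) :
    (1 - 10 * δ) * (C.card : ℝ) ≤ ((G.neighborFinset u ∩ C).card : ℝ) := by
  classical
  obtain ⟨v, rfl⟩ := hC
  set T := tildeGraph G δ with hT
  set C := Finset.univ.filter (fun w => T.Reachable v w) with hCdef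
  have memC : ∀ w, w ∈ C ↔ T.Reachable v w := by
    intro w; simp [hCdef]
  have adjC : ∀ a b, a ∈ C → T.Adj a b → b ∈ C := by
    intro a b ha hab
    rw [memC] at ha ⊢
    exact ha.trans hab.reachable
  -- find a tilde-neighbor of u
  obtain ⟨a, ha, b, hb, hab⟩ := Finset.one_lt_card.mp hC1
  have hw : ∃ w ∈ C, w ≠ u := by
    by_cases h : a = u
    · exact ⟨b, hb, by rw [← h]; exact fun e => hab e.symm⟩
    · exact ⟨a, ha, h⟩
  obtain ⟨w₁, hw₁C, hw₁u⟩ := hw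
  have hreach : T.Reachable u w₁ := ((memC u).mp hu).symm.trans ((memC w₁).mp hw₁C)
  obtain ⟨p⟩ := hreach
  obtain ⟨x, hux⟩ : ∃ x, T.Adj u x := by
    cases p with
    | nil => exact absurd rfl hw₁u.symm
    | cons h _ => exact ⟨_, h⟩
  -- the heavy anchor h0
  obtain ⟨h0, Hh0, h0C, x0, hT0⟩ : ∃ h0, Heavy G δ h0 ∧ h0 ∈ C ∧ ∃ x0, T.Adj h0 x0 := by
    rcases hux.2.2 with Hu | Hx
    · exact ⟨u, Hu, hu, x, hux⟩
    · exact ⟨x, Hx, adjC u x hu hux, u, hux.symm⟩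
  have d0big : 1 ≤ δ * deg G h0 := deg_big hδ0 (by linarith) hT0
  have d0nn : (0:ℝ) ≤ deg G h0 := deg_nonneg h0
  have d0pos : 1 ≤ deg G h0 := by nlinarith
  -- the invariant
  set P : V → Prop := fun z => ∃ h, Heavy G δ h ∧
      sdc G h0 h ≤ 3 * δ * max (deg G h0) (deg G h) ∧ (z = h ∨ T.Adj z h) with hP
  have step : ∀ x y, P x → T.Adj x y → P y := by
    intro x y px hxy
    obtain ⟨h, Hh, Hnear, hx⟩ := px
    have syh : sdc G h y ≤ 3 * δ * max (deg G h) (deg G y) := by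
      rcases hx with rfl | hxh
      · exact agr_le3 hδ0.le hxy.2.1
      · exact agr2 hδ0.le (by linarith) (agr_symm hxh.2.1) hxy.2.1
    rcases hxy.2.2 with Hx | Hy
    · rcases hx with rfl | hxh
      · exact ⟨x, Hh, Hnear, Or.inr hxy.symm⟩
      · have hnx : sdc G h0 x ≤ 3 * δ * max (deg G h0) (deg G x) :=
          near_trans hδ0 hδ Hh0 Hx d0pos Hnear (agr_le3 hδ0.le (agr_symm hxh.2.1))
        exact ⟨x, Hx, hnx, Or.inr hxy.symm⟩
    · have hny : sdc G h0 y ≤ 3 * δ * max (deg G h0) (deg G y) :=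
        near_trans hδ0 hδ Hh0 Hy d0pos Hnear syh
      exact ⟨y, Hy, hny, Or.inl rfl⟩
  have Ph0 : P h0 := by
    refine ⟨h0, Hh0, ?_, Or.inl rfl⟩
    rw [sdc_self]
    have := max_deg_nonneg (G := G) h0 h0
    nlinarith
  have walkind : ∀ x y, T.Walk x y → P x → P y := by
    intro x y p
    induction p with
    | nil => exact id
    | cons h _ ih => exact fun px => ih (step _ _ px h)
  have Pall : ∀ w ∈ C, P w := by
    intro w hwC
    obtain ⟨p⟩ := ((memC h0).mp h0C).symm.trans ((memC w).mp hwC)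
    exact walkind _ _ p Ph0
  -- key closeness
  have Kclose : ∀ w ∈ C, sdc G h0 w ≤ 5 * δ * deg G h0 := by
    intro w hwC
    obtain ⟨h, Hh, Hnear, hx⟩ := Pall w hwC
    have hk : sdc G h0 w ≤ (40/9) * δ * max (deg G h0) (deg G w) := by
      rcases hx with rfl | hwh
      · nlinarith [max_deg_nonneg (G := G) h0 w]
      · have h2 : sdc G h w ≤ δ * max (deg G h) (deg G w) := by
          rw [sdc_comm, max_comm]
          exact (agr_iff.mp hwh.2.1).le
        have := sd_chain (by positivity) hδ0.le (by linarith) (by linarith) Hnear h2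
        nlinarith [max_deg_nonneg (G := G) h0 w]
    have hr : deg G w ≤ (10/9) * deg G h0 :=
      deg_ratio (by positivity) (by nlinarith) hk
    have hm : max (deg G h0) (deg G w) ≤ (10/9) * deg G h0 := by
      apply max_le <;> nlinarith
    nlinarith [sdc_nonneg (G := G) h0 w]
  -- the agreeing neighborhood of h0
  set A0 := (G.neighborFinset h0).filter (fun y => InAgreement G δ h0 y) with hA0
  have A0sub : A0 ⊆ G.neighborFinset h0 := Finset.filter_subset _ _
  have A0card : (1 - δ) * deg G h0 < (A0.card : ℝ) := Hh0
  have A0le : (A0.card : ℝ) ≤ deg G h0 := by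
    unfold deg; exact_mod_cast Finset.card_le_card A0sub
  have A0C : A0 ⊆ C := by
    intro y hy
    rw [hA0, Finset.mem_filter, SimpleGraph.mem_neighborFinset] at hy
    exact adjC h0 y h0C ⟨hy.1, hy.2, Or.inl Hh0⟩
  -- lower bound on |N(u) ∩ C|
  have hNC : (1 - 6 * δ) * deg G h0 ≤ ((G.neighborFinset u ∩ C).card : ℝ) := by
    have hsub : A0 ∩ G.neighborFinset u ⊆ G.neighborFinset u ∩ C := by
      intro z hz
      rw [Finset.mem_inter] at hz ⊢
      exact ⟨hz.2, A0C hz.1⟩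
    have hdec := Finset.card_inter_add_card_sdiff A0 (G.neighborFinset u)
    have hsd : A0 \ G.neighborFinset u ⊆ G.neighborFinset h0 ∆ G.neighborFinset u := by
      refine Finset.Subset.trans (Finset.sdiff_subset_sdiff A0sub (le_refl _)) ?_
      exact sdiff_subset_sd _ _
    have hsd' : ((A0 \ G.neighborFinset u).card : ℝ) ≤ sdc G h0 u := by
      unfold sdc; exact_mod_cast Finset.card_le_card hsd
    have hK := Kclose u hu
    have hle := Finset.card_le_card hsub
    have e1 : ((A0 ∩ G.neighborFinset u).card : ℝ) + ((A0 \ G.neighborFinset u).card : ℝ)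
        = (A0.card : ℝ) := by exact_mod_cast hdec
    have e2 : ((A0 ∩ G.neighborFinset u).card : ℝ) ≤ ((G.neighborFinset u ∩ C).card : ℝ) := by
      exact_mod_cast hle
    nlinarith
  -- upper bound on |C|
  set B := C \ insert h0 (G.neighborFinset h0) with hB
  have hBup : (B.card : ℝ) ≤ (6/5) * δ * deg G h0 := by
    have hlow : ∀ w ∈ B, (1 - 6 * δ) * deg G h0 ≤ ((G.neighborFinset w ∩ A0).card : ℝ) := by
      intro w hwB
      have hwC : w ∈ C := (Finset.mem_sdiff.mp hwB).1
      have hdec := Finset.card_inter_add_card_sdiff A0 (G.neighborFinset w)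
      have hsd : A0 \ G.neighborFinset w ⊆ G.neighborFinset h0 ∆ G.neighborFinset w := by
        refine Finset.Subset.trans (Finset.sdiff_subset_sdiff A0sub (le_refl _)) ?_
        exact sdiff_subset_sd _ _
      have hsd' : ((A0 \ G.neighborFinset w).card : ℝ) ≤ sdc G h0 w := by
        unfold sdc; exact_mod_cast Finset.card_le_card hsd
      have hK := Kclose w hwC
      have e1 : ((A0 ∩ G.neighborFinset w).card : ℝ) + ((A0 \ G.neighborFinset w).card : ℝ)
          = (A0.card : ℝ) := by exact_mod_cast hdec
      have e2 : (A0 ∩ G.neighborFinset w).card = (G.neighborFinset w ∩ A0).card := by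
        rw [Finset.inter_comm]
      have e2' : ((A0 ∩ G.neighborFinset w).card : ℝ) = ((G.neighborFinset w ∩ A0).card : ℝ) := by
        exact_mod_cast e2
      nlinarith
    have hup : ∀ y ∈ A0, ((G.neighborFinset y ∩ B).card : ℝ) ≤ (10/9) * δ * deg G h0 := by
      intro y hy
      rw [hA0, Finset.mem_filter] at hy
      have hagr := hy.2
      have hdy : deg G y ≤ (10/9) * deg G h0 := deg_ratio hδ0.le (by linarith) (agr_iff.mp hagr).le
      have hsub2 : G.neighborFinset y ∩ B ⊆ G.neighborFinset y ∆ G.neighborFinset h0 := by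
        intro z hz
        rw [Finset.mem_inter] at hz
        have hzB := hz.2
        rw [hB, Finset.mem_sdiff] at hzB
        have : z ∉ G.neighborFinset h0 := fun hc => hzB.2 (Finset.mem_insert_of_mem hc)
        rw [Finset.mem_symmDiff]
        exact Or.inl ⟨hz.1, this⟩
      have hc2 : ((G.neighborFinset y ∩ B).card : ℝ) ≤ sdc G y h0 := by
        unfold sdc; exact_mod_cast Finset.card_le_card hsub2
      have hlt : sdc G y h0 < δ * max (deg G h0) (deg G y) := by
        rw [sdc_comm] at *
        exact agr_iff.mp hagr
      have hm : max (deg G h0) (deg G y) ≤ (10/9) * deg G h0 := by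
        apply max_le <;> nlinarith
      nlinarith
    have hsum1 : (B.card : ℝ) * ((1 - 6 * δ) * deg G h0) ≤
        ((∑ w ∈ B, (G.neighborFinset w ∩ A0).card : ℕ) : ℝ) := by
      push_cast
      have := Finset.sum_le_sum (f := fun w => (1 - 6 * δ) * deg G h0)
        (g := fun w : V => ((G.neighborFinset w ∩ A0).card : ℝ)) (s := B) hlow
      rw [Finset.sum_const, nsmul_eq_mul] at this
      linarith
    have hsum2 : ((∑ y ∈ A0, (G.neighborFinset y ∩ B).card : ℕ) : ℝ) ≤
        (A0.card : ℝ) * ((10/9) * δ * deg G h0) := by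
      push_cast
      have := Finset.sum_le_sum (f := fun y : V => ((G.neighborFinset y ∩ B).card : ℝ))
        (g := fun y => (10/9) * δ * deg G h0) (s := A0) hup
      rw [Finset.sum_const, nsmul_eq_mul] at this
      linarith
    have heqN : ∑ w ∈ B, (G.neighborFinset w ∩ A0).card
        = ∑ y ∈ A0, (G.neighborFinset y ∩ B).card := double_count B A0
    have heq : ((∑ w ∈ B, (G.neighborFinset w ∩ A0).card : ℕ) : ℝ) =
        ((∑ y ∈ A0, (G.neighborFinset y ∩ B).card : ℕ) : ℝ) := by
      exact_mod_cast heqN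
    have key : (B.card : ℝ) * ((1 - 6 * δ) * deg G h0) ≤
        deg G h0 * ((10/9) * δ * deg G h0) := by
      have h3 : (A0.card : ℝ) * ((10/9) * δ * deg G h0) ≤
          deg G h0 * ((10/9) * δ * deg G h0) := by
        apply mul_le_mul_of_nonneg_right A0le
        positivity
      linarith
    have hpos : (0:ℝ) < (1 - 6 * δ) * deg G h0 := by nlinarith
    nlinarith [key, hpos, mul_nonneg (mul_nonneg hδ0.le d0nn) d0nn,
      Nat.cast_nonneg (α := ℝ) B.card]
  have hCcard : (C.card : ℝ) ≤ (1 + (11/5) * δ) * deg G h0 := by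
    have hsub : C ⊆ B ∪ insert h0 (G.neighborFinset h0) := by
      intro z hz
      rw [Finset.mem_union, hB, Finset.mem_sdiff]
      by_cases h : z ∈ insert h0 (G.neighborFinset h0)
      · exact Or.inr h
      · exact Or.inl ⟨hz, h⟩
    have h1 := Finset.card_le_card hsub
    have h2 := Finset.card_union_le B (insert h0 (G.neighborFinset h0))
    have h3 := Finset.card_insert_le h0 (G.neighborFinset h0)
    have h4 : (C.card : ℝ) ≤ (B.card : ℝ) + ((G.neighborFinset h0).card : ℝ) + 1 := by
      have : C.card ≤ B.card + ((G.neighborFinset h0).card + 1) := by omega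
      exact_mod_cast this
    have : ((G.neighborFinset h0).card : ℝ) = deg G h0 := rfl
    nlinarith
  -- conclusion
  have h10 : (0:ℝ) ≤ 1 - 10 * δ := by linarith
  have := mul_le_mul_of_nonneg_left hCcard h10
  nlinarith [Nat.cast_nonneg (α := ℝ) C.card]

end Basic

/-- For every nontrivial cluster `C` of the agreement decomposition with
parameter `ε/10^14` and every `u ∈ C`, `|N(u) ∩ C| ≥ (1 − ε/10^13)·|C|`. -/
theorem cluster_nbr_inter_cluster_large :
    ∃ ε₀ : ℝ, 0 < ε₀ ∧
      ∀ (V : Type) (_ : Fintype V) (_ : DecidableEq V)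
        (G : SimpleGraph V) (_ : DecidableRel G.Adj) (ε : ℝ), 0 < ε → ε < ε₀ →
        ∀ C : Finset V, IsCluster G (ε / 10 ^ 14) C → 1 < C.card →
          ∀ u ∈ C,
            (1 - ε / 10 ^ 13) * (C.card : ℝ) ≤
              ((G.neighborFinset u ∩ C).card : ℝ) := by
  refine ⟨1, one_pos, ?_⟩
  intro V _ _ G _ ε hε0 hε1 C hC hC1 u hu
  have hδ0 : 0 < ε / 10 ^ 14 := by positivity
  have hδ : ε / 10 ^ 14 ≤ 1 / 1000 := by
    rw [div_le_div_iff₀ (by norm_num) (by norm_num)]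
    nlinarith
  have := master (G := G) (ε / 10 ^ 14) hδ0 hδ C hC hC1 u hu
  have he : 1 - ε / 10 ^ 13 = 1 - 10 * (ε / 10 ^ 14) := by ring
  rw [he]
  exact this
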